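/- Let E_1, …, E_g be d×d quantum effects that are jointly measurable, with joint POVM {G_η}_{η ∈ {0,1}^g}. Then for every g-tuple (X_1, …, X_g) of self-adjoint n×n matrices satisfying Σ_{i=1}^g ε_i X_i ≤ I_n for all sign vectors ε ∈ {±1}^g, it holds that Σ_{i=1}^g (2E_i - I_d) ⊗ X_i ≤ I_{dn}. -/

import Mathlib

open Matrix Kronecker
open scoped ComplexOrder

lemma conjTranspose_kronecker' {l m p q : Type*} (A : Matrix l m ℂ) (B : Matrix p q ℂ) :
    (A ⊗ₖ B)ᴴ = Aᴴ ⊗ₖ Bᴴ := by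
  ext ⟨i, j⟩ ⟨k, l⟩
  simp [conjTranspose_apply, kroneckerMap_apply, _root_.map_mul, mul_comm]

lemma PosSemidef.kron {m p : Type*} [Fintype m] [Fintype p] [DecidableEq m] [DecidableEq p]
    {A : Matrix m m ℂ} {B : Matrix p p ℂ} (hA : A.PosSemidef) (hB : B.PosSemidef) :
    (A ⊗ₖ B).PosSemidef := by
  exact Matrix.PosSemidef.kronecker hA hB

lemma PosSemidef.add' {m : Type*} [Fintype m] {A B : Matrix m m ℂ}
    (hA : A.PosSemidef) (hB : B.PosSemidef) : (A + B).PosSemidef := by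
  refine ⟨hA.1.add hB.1, fun x => ?_⟩
  have := add_nonneg (hA.2 x) (hB.2 x)
  simpa [mul_add, add_mul] using this

lemma PosSemidef.sum' {m ι : Type*} [Fintype m] (s : Finset ι) (f : ι → Matrix m m ℂ)
    (h : ∀ i ∈ s, (f i).PosSemidef) : (∑ i ∈ s, f i).PosSemidef :=
  Finset.sum_induction f Matrix.PosSemidef (fun _ _ ha hb => PosSemidef.add' ha hb)
    Matrix.PosSemidef.zero h

lemma sub_kronecker' {l m p q : Type*} (A B : Matrix l m ℂ) (C : Matrix p q ℂ) :
    (A - B) ⊗ₖ C = A ⊗ₖ C - B ⊗ₖ C := by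
  ext ⟨i, j⟩ ⟨k, l⟩; simp [kroneckerMap_apply, sub_mul]

lemma kronecker_sub' {l m p q : Type*} (A : Matrix l m ℂ) (B C : Matrix p q ℂ) :
    A ⊗ₖ (B - C) = A ⊗ₖ B - A ⊗ₖ C := by
  ext ⟨i, j⟩ ⟨k, l⟩; simp [kroneckerMap_apply, mul_sub]

lemma sum_kronecker' {l m p q ι : Type*} (s : Finset ι) (A : ι → Matrix l m ℂ)
    (C : Matrix p q ℂ) : (∑ i ∈ s, A i) ⊗ₖ C = ∑ i ∈ s, A i ⊗ₖ C := by
  ext ⟨i, j⟩ ⟨k, l⟩; simp [kroneckerMap_apply, Finset.sum_mul, Matrix.sum_apply]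

lemma kronecker_sum' {l m p q ι : Type*} (s : Finset ι) (A : Matrix l m ℂ)
    (C : ι → Matrix p q ℂ) : A ⊗ₖ (∑ i ∈ s, C i) = ∑ i ∈ s, A ⊗ₖ C i := by
  ext ⟨i, j⟩ ⟨k, l⟩; simp [kroneckerMap_apply, Finset.mul_sum, Matrix.sum_apply]

/-- If the effects `E₁, …, E_g` are jointly measurable with joint POVM
`{G_η}_{η∈{0,1}^g}`, then every incompatibility witness `(X₁,…,X_g)` (a tuple of
self-adjoint matrices with `∑ᵢ εᵢXᵢ ≤ I` for all sign vectors `ε`) satisfies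
`∑ᵢ (2Eᵢ - I) ⊗ Xᵢ ≤ I`. -/
theorem stmt_16 {d n g : ℕ}
    (E : Fin g → Matrix (Fin d) (Fin d) ℂ)
    (hE : ∀ i, (E i).PosSemidef ∧ ((1 : Matrix (Fin d) (Fin d) ℂ) - E i).PosSemidef)
    (G : (Fin g → Fin 2) → Matrix (Fin d) (Fin d) ℂ)
    (hGpos : ∀ η, (G η).PosSemidef) (hGsum : ∑ η, G η = 1)
    (hmarg : ∀ i, E i = ∑ η ∈ Finset.univ.filter (fun η : Fin g → Fin 2 => η i = 0), G η)
    (X : Fin g → Matrix (Fin n) (Fin n) ℂ) (hX : ∀ i, (X i).IsHermitian)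
    (hwit : ∀ ε : Fin g → ℝ, (∀ i, ε i = 1 ∨ ε i = -1) →
      ((1 : Matrix (Fin n) (Fin n) ℂ) - ∑ i, ((ε i : ℝ) : ℂ) • X i).PosSemidef) :
    ((1 : Matrix (Fin d × Fin n) (Fin d × Fin n) ℂ)
      - ∑ i, ((2 : ℂ) • E i - 1) ⊗ₖ X i).PosSemidef := by
  set ε : (Fin g → Fin 2) → Fin g → ℝ := fun η i => if η i = 0 then 1 else -1 with hε
  have h2E : ∀ i, (2 : ℂ) • E i - 1 = ∑ η, ((ε η i : ℝ) : ℂ) • G η := by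
    intro i
    have h1 : ∑ η ∈ Finset.univ.filter (fun η : Fin g → Fin 2 => η i = 0),
        ((ε η i : ℝ) : ℂ) • G η
        = ∑ η ∈ Finset.univ.filter (fun η : Fin g → Fin 2 => η i = 0), G η := by
      refine Finset.sum_congr rfl fun η hη => ?_
      have := (Finset.mem_filter.mp hη).2
      simp [hε, this]
    have h2 : ∑ η ∈ Finset.univ.filter (fun η : Fin g → Fin 2 => ¬ η i = 0),
        ((ε η i : ℝ) : ℂ) • G η
        = -∑ η ∈ Finset.univ.filter (fun η : Fin g → Fin 2 => ¬ η i = 0), G η := by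
      rw [← Finset.sum_neg_distrib]
      refine Finset.sum_congr rfl fun η hη => ?_
      have := (Finset.mem_filter.mp hη).2
      simp [hε, this]
    have hnot : ∑ η ∈ Finset.univ.filter (fun η : Fin g → Fin 2 => ¬ η i = 0), G η
        = 1 - E i := by
      have hadd := Finset.sum_filter_add_sum_filter_not Finset.univ
        (fun η : Fin g → Fin 2 => η i = 0) G
      rw [hGsum, ← hmarg i] at hadd
      rw [← hadd]; abel
    rw [← Finset.sum_filter_add_sum_filter_not Finset.univ
      (fun η : Fin g → Fin 2 => η i = 0) (fun η => ((ε η i : ℝ) : ℂ) • G η),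
      h1, h2, hnot, ← hmarg i]
    module
  have key : (1 : Matrix (Fin d × Fin n) (Fin d × Fin n) ℂ)
      - ∑ i, ((2 : ℂ) • E i - 1) ⊗ₖ X i
      = ∑ η, (G η) ⊗ₖ ((1 : Matrix (Fin n) (Fin n) ℂ) - ∑ i, ((ε η i : ℝ) : ℂ) • X i) := by
    calc (1 : Matrix (Fin d × Fin n) (Fin d × Fin n) ℂ)
        - ∑ i, ((2 : ℂ) • E i - 1) ⊗ₖ X i
        = (∑ η, G η) ⊗ₖ (1 : Matrix (Fin n) (Fin n) ℂ)
          - ∑ i, (∑ η, ((ε η i : ℝ) : ℂ) • G η) ⊗ₖ X i := by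
          rw [hGsum, Matrix.one_kronecker_one]
          congr 1
          exact Finset.sum_congr rfl fun i _ => by rw [h2E]
      _ = ∑ η, (G η) ⊗ₖ ((1 : Matrix (Fin n) (Fin n) ℂ) - ∑ i, ((ε η i : ℝ) : ℂ) • X i) := by
          simp only [kronecker_sub', kronecker_sum', sum_kronecker', Matrix.smul_kronecker,
            Matrix.kronecker_smul, Finset.sum_sub_distrib]
          rw [Finset.sum_comm]
  rw [key]
  refine PosSemidef.sum' _ _ fun η _ => PosSemidef.kron (hGpos η) ?_
  exact hwit (ε η) (fun i => by by_cases h : η i = 0 <;> simp [hε, h])
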